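/- For every X ⊆ ℝⁿ and every k ∈ ℕ, the k-fold Cartesian power X^k ⊆ ℝ^{nk} satisfies dim_CM(X^k) = k · dim_CM(X). -/

import Mathlib

open Filter Metric Set

/-- `coverNum δ X` is the minimum number of open balls of radius `δ` needed to cover `X`. -/
noncomputable def coverNum {α : Type*} [PseudoMetricSpace α] (δ : ℝ) (X : Set α) : ℕ :=
  sInf {k : ℕ | ∃ S : Finset α, S.card = k ∧ X ⊆ ⋃ p ∈ S, Metric.ball p δ}

/-- The coarse Minkowski dimension of `Z`. -/
noncomputable def dimCM {α : Type*} [SeminormedAddGroup α] (Z : Set α) : ℝ :=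
  limsup (fun r : ℝ =>
    Real.log (coverNum 1 (Metric.ball (0 : α) r ∩ Z) : ℝ) / Real.log r) atTop

/-- The `k`-fold Cartesian power `X^k ⊆ ℝ^(nk)` of `X ⊆ ℝ^n`, with `ℝ^(nk)` realized as the
Euclidean space indexed by `Fin k × Fin n`. -/
def powSet {n : ℕ} (X : Set (EuclideanSpace ℝ (Fin n))) (k : ℕ) :
    Set (EuclideanSpace ℝ (Fin k × Fin n)) :=
  {z | ∀ j : Fin k, (WithLp.toLp 2 (fun i => z (j, i)) : EuclideanSpace ℝ (Fin n)) ∈ X}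


section basics
variable {α : Type*} [PseudoMetricSpace α] {δ : ℝ} {X Y : Set α}


/-- If `S` covers `X`, then `coverNum δ X ≤ S.card`. -/
lemma coverNum_le_of_cover {S : Finset α} (h : X ⊆ ⋃ p ∈ S, ball p δ) :
    coverNum δ X ≤ S.card := Nat.sInf_le ⟨S, rfl, h⟩

def Coverable (δ : ℝ) (X : Set α) : Prop := ∃ S : Finset α, X ⊆ ⋃ p ∈ S, ball p δ

lemma Coverable.exists_cover (h : Coverable δ X) :
    ∃ S : Finset α, S.card = coverNum δ X ∧ X ⊆ ⋃ p ∈ S, ball p δ := by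
  obtain ⟨S, hS⟩ := h
  have : sInf {k : ℕ | ∃ S : Finset α, S.card = k ∧ X ⊆ ⋃ p ∈ S, ball p δ}
      ∈ {k : ℕ | ∃ S : Finset α, S.card = k ∧ X ⊆ ⋃ p ∈ S, ball p δ} :=
    Nat.sInf_mem ⟨S.card, S, rfl, hS⟩
  obtain ⟨T, hT, hTc⟩ := this
  exact ⟨T, hT, hTc⟩

lemma Coverable.mono (h : Coverable δ Y) (hXY : X ⊆ Y) : Coverable δ X := by
  obtain ⟨S, hS⟩ := h; exact ⟨S, hXY.trans hS⟩

lemma coverNum_mono (h : Coverable δ Y) (hXY : X ⊆ Y) : coverNum δ X ≤ coverNum δ Y := by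
  obtain ⟨S, hcard, hcov⟩ := h.exists_cover
  exact hcard ▸ coverNum_le_of_cover (hXY.trans hcov)

lemma one_le_coverNum (h : Coverable δ X) (hne : X.Nonempty) : 1 ≤ coverNum δ X := by
  obtain ⟨S, hcard, hcov⟩ := h.exists_cover
  rcases Nat.eq_zero_or_pos (coverNum δ X) with h0 | h1
  · exfalso
    obtain ⟨x, hx⟩ := hne
    have hS0 : S = ∅ := Finset.card_eq_zero.mp (hcard.trans h0)
    have h2 := hcov hx
    rw [hS0] at h2
    simp at h2
  · exact h1

lemma isBounded_coverable {α : Type*} [PseudoMetricSpace α] [ProperSpace α] {X : Set α}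
    (h : Bornology.IsBounded X) {δ : ℝ} (hδ : 0 < δ) : Coverable δ X := by
  rcases X.eq_empty_or_nonempty with rfl | ⟨x0, hx0⟩
  · exact ⟨∅, by simp⟩
  obtain ⟨R, hR⟩ := h.subset_closedBall x0
  have htb : TotallyBounded X :=
    (isCompact_closedBall x0 R).totallyBounded.subset hR
  obtain ⟨t, htf, htc⟩ := (totallyBounded_iff.mp htb) δ hδ
  exact ⟨htf.toFinset, by simpa using htc⟩

/-- A `2δ`-separated subset of `X` has cardinality at most `coverNum δ X`. -/
lemma separated_card_le (h : Coverable δ X) {P : Finset α} (hPX : ↑P ⊆ X)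
    (hsep : ∀ x ∈ P, ∀ y ∈ P, x ≠ y → 2 * δ ≤ dist x y) : P.card ≤ coverNum δ X := by
  obtain ⟨S, hcard, hcov⟩ := h.exists_cover
  rw [← hcard]
  have hc : ∀ x : α, ∃ s, x ∈ P → s ∈ S ∧ x ∈ ball s δ := by
    intro x
    by_cases hx : x ∈ P
    · have := hcov (hPX hx)
      simp only [mem_iUnion, exists_prop] at this
      obtain ⟨s, hs1, hs2⟩ := this
      exact ⟨s, fun _ => ⟨hs1, hs2⟩⟩
    · exact ⟨x, fun h => absurd h hx⟩
  choose c hc using hc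
  refine Finset.card_le_card_of_injOn c (fun x hx => ((hc x) hx).1) ?_
  intro x hx y hy hxy
  simp only [Finset.mem_coe] at hx hy
  by_contra hne
  have h2 := hsep x hx y hy hne
  have d1 : dist x (c x) < δ := mem_ball.mp ((hc x hx).2)
  have d2 : dist y (c y) < δ := mem_ball.mp ((hc y hy).2)
  have h3 : dist x y ≤ dist x (c x) + dist (c y) y := by
    rw [hxy]; exact dist_triangle _ _ _
  rw [dist_comm (c y) y] at h3
  linarith

end basics


lemma abs_coord_le_norm {ι : Type*} [Fintype ι] (x : EuclideanSpace ℝ ι) (i : ι) :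
    |x i| ≤ ‖x‖ := by
  rw [EuclideanSpace.norm_eq]
  have h1 : |x i| = Real.sqrt (‖x i‖^2) := by
    rw [Real.sqrt_sq_eq_abs]; simp
  rw [h1]
  apply Real.sqrt_le_sqrt
  exact Finset.single_le_sum (f := fun j => ‖x j‖^2) (fun j _ => sq_nonneg _)
    (Finset.mem_univ i)

lemma grid_cover {ι : Type*} [Fintype ι] {r : ℝ} (hr : 1 ≤ r) :
    (coverNum 1 (ball (0 : EuclideanSpace ℝ ι) r) : ℝ) ≤
      ((2 * (Fintype.card ι : ℝ) + 5) * r) ^ (Fintype.card ι) := by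
  classical
  set d := Fintype.card ι with hd
  rcases Nat.eq_zero_or_pos d with h0 | hpos
  · have hcov : ball (0 : EuclideanSpace ℝ ι) r ⊆
        ⋃ p ∈ ({0} : Finset (EuclideanSpace ℝ ι)), ball p 1 := by
      intro x _
      have hempty : IsEmpty ι := Fintype.card_eq_zero_iff.mp h0
      simp only [Finset.mem_singleton, mem_iUnion, exists_prop]
      refine ⟨0, rfl, ?_⟩
      rw [mem_ball, EuclideanSpace.dist_eq]
      simp
    have h1 := coverNum_le_of_cover hcov
    simp only [Finset.card_singleton] at h1
    rw [h0]
    simp only [pow_zero]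
    exact_mod_cast h1
  · have hd1 : (1:ℝ) ≤ (d:ℝ) := by exact_mod_cast hpos
    have hdpos : (0:ℝ) < (d:ℝ) := by linarith
    set M : ℤ := ⌈(d:ℝ) * r⌉ + 1 with hM
    have hMr : (d:ℝ) * r + 1 ≤ (M:ℝ) := by
      push_cast [hM]
      have := Int.le_ceil ((d:ℝ) * r)
      linarith
    have hM1 : (1:ℝ) ≤ (M:ℝ) := by nlinarith
    set F : (ι → ℤ) → EuclideanSpace ℝ ι := fun g => WithLp.toLp 2 (fun i => (g i : ℝ) / d) with hF
    set S : Finset (EuclideanSpace ℝ ι) :=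
      Finset.image F (Fintype.piFinset (fun _ => Finset.Icc (-M) M)) with hS
    have hcov : ball (0 : EuclideanSpace ℝ ι) r ⊆ ⋃ p ∈ S, ball p 1 := by
      intro x hx
      have hxr : ‖x‖ < r := by simpa [mem_ball, dist_zero_right] using hx
      set g : ι → ℤ := fun i => round ((d:ℝ) * x i) with hg
      have hgmem : g ∈ Fintype.piFinset (fun _ : ι => Finset.Icc (-M) M) := by
        rw [Fintype.mem_piFinset]
        intro i
        rw [Finset.mem_Icc]
        have h1 : |(d:ℝ) * x i - (g i : ℝ)| ≤ 1/2 := abs_sub_round _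
        have h2 : |x i| ≤ ‖x‖ := abs_coord_le_norm x i
        have h4 : |(d:ℝ) * x i| ≤ (d:ℝ) * r := by
          rw [abs_mul, abs_of_pos hdpos]
          have : |x i| ≤ r := le_of_lt (lt_of_le_of_lt h2 hxr)
          nlinarith
        have h5 : |(g i:ℝ)| - |(d:ℝ) * x i| ≤ 1/2 := by
          have := abs_sub_abs_le_abs_sub ((g i:ℝ)) ((d:ℝ) * x i)
          rw [abs_sub_comm] at h1
          linarith
        have h6 : |(g i : ℝ)| ≤ (M:ℝ) := by linarith
        have h7 : |g i| ≤ M := by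
          rw [← Int.cast_abs] at h6
          exact_mod_cast h6
        exact abs_le.mp h7
      refine mem_iUnion.mpr ⟨F g, mem_iUnion.mpr ⟨Finset.mem_image_of_mem F hgmem, ?_⟩⟩
      rw [mem_ball, EuclideanSpace.dist_eq]
      have hterm : ∀ i : ι, dist (x i) (F g i) ^ 2 ≤ (1/(2*(d:ℝ)))^2 := by
        intro i
        have h1 : |(d:ℝ) * x i - (g i : ℝ)| ≤ 1/2 := abs_sub_round _
        have h2 : dist (x i) (F g i) ≤ 1/(2*(d:ℝ)) := by
          show dist (x i) ((g i : ℝ)/d) ≤ 1/(2*(d:ℝ))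
          rw [Real.dist_eq]
          have he : x i - (g i:ℝ)/d = ((d:ℝ) * x i - (g i:ℝ))/d := by
            field_simp
          rw [he, abs_div, abs_of_pos hdpos]
          rw [div_le_div_iff₀ hdpos (by positivity)]
          calc |(d:ℝ) * x i - (g i:ℝ)| * (2*(d:ℝ)) ≤ (1/2) * (2*(d:ℝ)) :=
                mul_le_mul_of_nonneg_right h1 (by positivity)
            _ = 1 * (d:ℝ) := by ring
        exact pow_le_pow_left₀ dist_nonneg h2 2
      have hsum : ∑ i : ι, dist (x i) (F g i) ^ 2 ≤ (d:ℝ) * (1/(2*(d:ℝ)))^2 := by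
        calc ∑ i : ι, dist (x i) (F g i) ^ 2 ≤ ∑ _i : ι, (1/(2*(d:ℝ)))^2 :=
              Finset.sum_le_sum (fun i _ => hterm i)
          _ = (d:ℝ) * (1/(2*(d:ℝ)))^2 := by
              rw [Finset.sum_const, Finset.card_univ, ← hd, nsmul_eq_mul]
      have hq : (d:ℝ) * (1/(2*(d:ℝ)))^2 ≤ 1/4 := by
        have heq : (d:ℝ) * (1/(2*(d:ℝ)))^2 = 1/(4*(d:ℝ)) := by
          field_simp
          ring
        rw [heq, div_le_div_iff₀ (by positivity) (by norm_num)]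
        nlinarith
      calc Real.sqrt (∑ i : ι, dist (x i) (F g i) ^ 2) ≤ Real.sqrt (1/4) :=
            Real.sqrt_le_sqrt (hsum.trans hq)
        _ < 1 := by
            rw [show (1:ℝ)/4 = (1/2)^2 by norm_num, Real.sqrt_sq (by norm_num)]
            norm_num
    have hcard : (S.card : ℝ) ≤ ((2 * (d:ℝ) + 5) * r)^d := by
      have h1 : S.card ≤ (Fintype.piFinset (fun _ : ι => Finset.Icc (-M) M)).card :=
        Finset.card_image_le
      rw [Fintype.card_piFinset] at h1
      simp only [Finset.prod_const, Finset.card_univ, ← hd] at h1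
      have h2 : (Finset.Icc (-M) M).card = (2*M+1).toNat := by
        rw [Int.card_Icc]
        congr 1
        ring
      rw [h2] at h1
      have hMnn : (0:ℝ) ≤ 2*(M:ℝ)+1 := by linarith
      have h3 : (((2*M+1).toNat : ℝ)) = 2*(M:ℝ)+1 := by
        have hMz : (1:ℤ) ≤ M := by exact_mod_cast hM1
        have h0 : (0:ℤ) ≤ 2*M+1 := by linarith
        rw [show (((2*M+1).toNat : ℝ)) = (((2*M+1).toNat : ℤ) : ℝ) by push_cast; ring,
          Int.toNat_of_nonneg h0]
        push_cast; ring
      have h4 : 2*(M:ℝ)+1 ≤ (2*(d:ℝ)+5)*r := by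
        have hceil : (M:ℝ) ≤ (d:ℝ)*r + 2 := by
          push_cast [hM]
          have := Int.ceil_lt_add_one ((d:ℝ)*r)
          linarith
        nlinarith
      calc (S.card : ℝ) ≤ (((2*M+1).toNat : ℝ))^d := by exact_mod_cast h1
        _ = (2*(M:ℝ)+1)^d := by rw [h3]
        _ ≤ ((2*(d:ℝ)+5)*r)^d := pow_le_pow_left₀ hMnn h4 d
    calc (coverNum 1 (ball (0 : EuclideanSpace ℝ ι) r) : ℝ) ≤ (S.card : ℝ) := by
          exact_mod_cast coverNum_le_of_cover hcov
      _ ≤ ((2 * (d:ℝ) + 5) * r)^d := hcard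

variable {n k : ℕ}

def proj (j : Fin k) (z : EuclideanSpace ℝ (Fin k × Fin n)) : EuclideanSpace ℝ (Fin n) :=
  WithLp.toLp 2 (fun i => z (j, i))

def glue (c : Fin k → EuclideanSpace ℝ (Fin n)) : EuclideanSpace ℝ (Fin k × Fin n) :=
  WithLp.toLp 2 (fun p : Fin k × Fin n => c p.1 p.2)

@[simp] lemma proj_glue (c : Fin k → EuclideanSpace ℝ (Fin n)) (j : Fin k) :
    proj j (glue c) = c j := rfl

lemma dist_sq_eq (z w : EuclideanSpace ℝ (Fin k × Fin n)) :
    dist z w ^ 2 = ∑ j : Fin k, dist (proj j z) (proj j w) ^ 2 := by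
  rw [EuclideanSpace.dist_eq, Real.sq_sqrt (Finset.sum_nonneg fun _ _ => sq_nonneg _)]
  rw [Fintype.sum_prod_type]
  congr 1
  funext j
  rw [EuclideanSpace.dist_eq, Real.sq_sqrt (Finset.sum_nonneg fun _ _ => sq_nonneg _)]
  rfl

lemma dist_proj_le (z w : EuclideanSpace ℝ (Fin k × Fin n)) (j : Fin k) :
    dist (proj j z) (proj j w) ≤ dist z w := by
  have h1 : dist (proj j z) (proj j w) ^ 2 ≤ dist z w ^ 2 := by
    rw [dist_sq_eq]
    exact Finset.single_le_sum (f := fun j => dist (proj j z) (proj j w) ^ 2)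
      (fun _ _ => sq_nonneg _) (Finset.mem_univ j)
  calc dist (proj j z) (proj j w) = Real.sqrt (dist (proj j z) (proj j w) ^ 2) :=
        (Real.sqrt_sq dist_nonneg).symm
    _ ≤ Real.sqrt (dist z w ^ 2) := Real.sqrt_le_sqrt h1
    _ = dist z w := Real.sqrt_sq dist_nonneg

lemma dist_glue_lt (hk : 0 < k) (z : EuclideanSpace ℝ (Fin k × Fin n))
    (c : Fin k → EuclideanSpace ℝ (Fin n)) {ρ : ℝ} (hρ : 0 < ρ)
    (h : ∀ j, dist (proj j z) (c j) < ρ) :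
    dist z (glue c) < Real.sqrt k * ρ := by
  have h1 : dist z (glue c) ^ 2 < k * ρ^2 := by
    rw [dist_sq_eq]
    have : ∀ j : Fin k, dist (proj j z) (proj j (glue c)) ^ 2 < ρ^2 := by
      intro j
      rw [proj_glue]
      have := h j
      nlinarith [dist_nonneg (x := proj j z) (y := c j)]
    calc ∑ j : Fin k, dist (proj j z) (proj j (glue c)) ^ 2 < ∑ _j : Fin k, ρ^2 :=
          Finset.sum_lt_sum_of_nonempty (Finset.univ_nonempty_iff.mpr
            (Fin.pos_iff_nonempty.mp hk)) (fun j _ => this j)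
      _ = k * ρ^2 := by rw [Finset.sum_const, Finset.card_univ, Fintype.card_fin, nsmul_eq_mul]
  calc dist z (glue c) = Real.sqrt (dist z (glue c) ^ 2) := (Real.sqrt_sq dist_nonneg).symm
    _ < Real.sqrt (k * ρ^2) := Real.sqrt_lt_sqrt (sq_nonneg _) h1
    _ = Real.sqrt k * ρ := by
        rw [Real.sqrt_mul (Nat.cast_nonneg k), Real.sqrt_sq hρ.le]

@[simp] lemma proj_zero (j : Fin k) :
    proj j (0 : EuclideanSpace ℝ (Fin k × Fin n)) = 0 := rfl

lemma glue_injective : Function.Injective (glue (n := n) (k := k)) := by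
  intro c c' h
  funext j
  ext i
  exact congrFun (congrArg WithLp.ofLp h) (j, i)

lemma mem_powSet_iff {n k : ℕ} {X : Set (EuclideanSpace ℝ (Fin n))}
    {z : EuclideanSpace ℝ (Fin k × Fin n)} :
    z ∈ powSet X k ↔ ∀ j : Fin k, proj j z ∈ X := Iff.rfl

lemma cover_translate {E : Type*} [SeminormedAddCommGroup E] {T : Finset E} {ρ : ℝ}
    (hT : ball (0:E) ρ ⊆ ⋃ t ∈ T, ball t 1) (c : E) :
    ball c ρ ⊆ ⋃ t ∈ T, ball (c + t) 1 := by
  intro x hx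
  have h1 : x - c ∈ ball (0:E) ρ := by
    rw [mem_ball, dist_zero_right] at *
    simpa [dist_eq_norm] using hx
  obtain ⟨t, ht, htb⟩ := by simpa only [mem_iUnion, exists_prop] using hT h1
  refine mem_iUnion.mpr ⟨t, mem_iUnion.mpr ⟨ht, ?_⟩⟩
  rw [mem_ball, dist_eq_norm] at *
  have : x - (c + t) = x - c - t := by abel
  rwa [this]

lemma norm_proj_le {n k : ℕ} (z : EuclideanSpace ℝ (Fin k × Fin n)) (j : Fin k) :
    ‖proj j z‖ ≤ ‖z‖ := by
  have := dist_proj_le z 0 j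
  simpa [dist_zero_right] using this

variable {n k : ℕ} {X : Set (EuclideanSpace ℝ (Fin n))}

lemma lemA (hk : 0 < k) (X : Set (EuclideanSpace ℝ (Fin n))) (r : ℝ) :
    coverNum 1 (ball (0 : EuclideanSpace ℝ (Fin k × Fin n)) r ∩ powSet X k) ≤
      (coverNum 1 (ball (0 : EuclideanSpace ℝ (Fin n)) r ∩ X))^k *
        coverNum 1 (ball (0 : EuclideanSpace ℝ (Fin k × Fin n)) (Real.sqrt k)) := by
  classical
  obtain ⟨S, hScard, hScov⟩ :=
    (isBounded_coverable (isBounded_ball.subset inter_subset_left) one_pos).exists_cover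
      (X := ball (0 : EuclideanSpace ℝ (Fin n)) r ∩ X)
  obtain ⟨T, hTcard, hTcov⟩ :=
    (isBounded_coverable isBounded_ball one_pos).exists_cover
      (X := ball (0 : EuclideanSpace ℝ (Fin k × Fin n)) (Real.sqrt k))
  set U : Finset (EuclideanSpace ℝ (Fin k × Fin n)) :=
    Finset.image (fun q : (Fin k → EuclideanSpace ℝ (Fin n)) × EuclideanSpace ℝ (Fin k × Fin n) =>
        glue q.1 + q.2) ((Fintype.piFinset fun _ => S) ×ˢ T) with hU
  have hcov : ball (0 : EuclideanSpace ℝ (Fin k × Fin n)) r ∩ powSet X k ⊆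
      ⋃ p ∈ U, ball p 1 := by
    intro z ⟨hzb, hzX⟩
    have hproj : ∀ j : Fin k, ∃ s, s ∈ S ∧ dist (proj j z) s < 1 := by
      intro j
      have h1 : proj j z ∈ ball (0 : EuclideanSpace ℝ (Fin n)) r ∩ X := by
        constructor
        · rw [mem_ball, dist_zero_right]
          exact lt_of_le_of_lt (norm_proj_le z j) (by rwa [mem_ball, dist_zero_right] at hzb)
        · exact (mem_powSet_iff.mp hzX) j
      have := hScov h1
      simp only [mem_iUnion, exists_prop, mem_ball] at this
      exact this
    choose c hcS hcd using hproj
    have hzc : z ∈ ball (glue c) (Real.sqrt k) := by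
      rw [mem_ball]
      have := dist_glue_lt hk z c one_pos hcd
      simpa using this
    obtain ⟨t, ht, htb⟩ := by
      simpa only [mem_iUnion, exists_prop] using cover_translate hTcov (glue c) hzc
    refine mem_iUnion.mpr ⟨glue c + t, mem_iUnion.mpr ⟨?_, htb⟩⟩
    refine Finset.mem_image.mpr ⟨(c, t), ?_, rfl⟩
    rw [Finset.mem_product]
    exact ⟨Fintype.mem_piFinset.mpr hcS, ht⟩
  calc coverNum 1 (ball (0 : EuclideanSpace ℝ (Fin k × Fin n)) r ∩ powSet X k) ≤ U.card :=
        coverNum_le_of_cover hcov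
    _ ≤ ((Fintype.piFinset fun _ : Fin k => S) ×ˢ T).card := Finset.card_image_le
    _ = _ := by
        rw [Finset.card_product, Fintype.card_piFinset]
        simp [hScard, hTcard]

lemma lemB (hk : 0 < k) (X : Set (EuclideanSpace ℝ (Fin n))) (r : ℝ) :
    ∃ m : ℕ,
      coverNum 1 (ball (0 : EuclideanSpace ℝ (Fin n)) r ∩ X) ≤
        m * coverNum 1 (ball (0 : EuclideanSpace ℝ (Fin n)) 2) ∧
      m ^ k ≤ coverNum 1
        (ball (0 : EuclideanSpace ℝ (Fin k × Fin n)) (Real.sqrt k * r) ∩ powSet X k) := by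
  classical
  set B := ball (0 : EuclideanSpace ℝ (Fin n)) r ∩ X with hB
  have hBcov : Coverable 1 B := isBounded_coverable (isBounded_ball.subset inter_subset_left) one_pos
  rcases B.eq_empty_or_nonempty with hBe | hBne
  · refine ⟨0, ?_, ?_⟩
    · have : coverNum 1 B ≤ (∅ : Finset (EuclideanSpace ℝ (Fin n))).card :=
        coverNum_le_of_cover (by rw [hBe]; simp)
      simpa using this
    · rw [zero_pow hk.ne']
      exact Nat.zero_le _
  -- the set of cardinalities of 2-separated subsets of B
  set A : Set ℕ := {c : ℕ | ∃ P : Finset (EuclideanSpace ℝ (Fin n)), P.card = c ∧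
    ↑P ⊆ B ∧ ∀ x ∈ P, ∀ y ∈ P, x ≠ y → 2 * 1 ≤ dist x y} with hA
  have hA0 : (0 : ℕ) ∈ A := ⟨∅, by simp⟩
  have hAbdd : BddAbove A := by
    refine ⟨coverNum 1 B, ?_⟩
    rintro c ⟨P, rfl, hPB, hPsep⟩
    exact separated_card_le hBcov hPB hPsep
  set m := sSup A with hm
  obtain ⟨P, hPcard, hPB, hPsep⟩ := Nat.sSup_mem ⟨0, hA0⟩ hAbdd
  -- maximality: P is a 2-net of B
  have hnet : B ⊆ ⋃ p ∈ P, ball p 2 := by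
    intro x hx
    by_contra hxn
    have hfar : ∀ p ∈ P, 2 ≤ dist x p := by
      intro p hp
      by_contra hlt
      exact hxn (mem_iUnion.mpr ⟨p, mem_iUnion.mpr ⟨hp, mem_ball.mpr (not_le.mp hlt)⟩⟩)
    have hxP : x ∉ P := by
      intro hxP
      have := hfar x hxP
      rw [dist_self] at this
      linarith
    have hins : (m + 1) ∈ A := by
      refine ⟨insert x P, ?_, ?_, ?_⟩
      · rw [Finset.card_insert_of_notMem hxP, hPcard]
      · intro y hy
        rcases Finset.mem_insert.mp (by exact_mod_cast hy) with rfl | hyP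
        · exact hx
        · exact hPB hyP
      · intro a ha b hb hab
        rcases Finset.mem_insert.mp ha with rfl | haP
        · rcases Finset.mem_insert.mp hb with rfl | hbP
          · exact absurd rfl hab
          · simpa using hfar b hbP
        · rcases Finset.mem_insert.mp hb with rfl | hbP
          · rw [dist_comm]; simpa using hfar a haP
          · exact hPsep a haP b hbP hab
    have := le_csSup hAbdd hins
    omega
  refine ⟨m, ?_, ?_⟩
  · -- cover B by m * C₂ unit balls
    obtain ⟨T, hTcard, hTcov⟩ :=
      (isBounded_coverable isBounded_ball one_pos).exists_cover
        (X := ball (0 : EuclideanSpace ℝ (Fin n)) 2)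
    set U := Finset.image (fun q : EuclideanSpace ℝ (Fin n) × EuclideanSpace ℝ (Fin n) =>
      q.1 + q.2) (P ×ˢ T) with hU
    have hcov : B ⊆ ⋃ p ∈ U, ball p 1 := by
      intro x hx
      obtain ⟨p, hp, hpb⟩ := by simpa only [mem_iUnion, exists_prop] using hnet hx
      obtain ⟨t, ht, htb⟩ := by
        simpa only [mem_iUnion, exists_prop] using cover_translate hTcov p hpb
      refine mem_iUnion.mpr ⟨p + t, mem_iUnion.mpr ⟨?_, htb⟩⟩
      exact Finset.mem_image.mpr ⟨(p, t), Finset.mem_product.mpr ⟨hp, ht⟩, rfl⟩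
    calc coverNum 1 B ≤ U.card := coverNum_le_of_cover hcov
      _ ≤ (P ×ˢ T).card := Finset.card_image_le
      _ = m * coverNum 1 (ball (0 : EuclideanSpace ℝ (Fin n)) 2) := by
          rw [Finset.card_product, hPcard, hTcard]
  · -- P^k is a 2-separated subset of the big set
    have hr : 0 < r := by
      obtain ⟨x, hx, _⟩ := hBne
      have := mem_ball.mp hx
      have := dist_nonneg (x := x) (y := (0 : EuclideanSpace ℝ (Fin n)))
      linarith
    set Q := Finset.image glue (Fintype.piFinset fun _ : Fin k => P) with hQ
    have hQcard : Q.card = m ^ k := by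
      rw [Finset.card_image_of_injective _ glue_injective, Fintype.card_piFinset]
      simp [hPcard, hm]
    have hQsub : ↑Q ⊆ ball (0 : EuclideanSpace ℝ (Fin k × Fin n)) (Real.sqrt k * r) ∩ powSet X k := by
      intro z hz
      obtain ⟨c, hc, rfl⟩ := Finset.mem_image.mp (Finset.mem_coe.mp hz)
      have hcP : ∀ j, c j ∈ P := Fintype.mem_piFinset.mp hc
      constructor
      · rw [mem_ball, dist_comm]
        apply dist_glue_lt hk _ c hr
        intro j
        rw [proj_zero, dist_comm]
        have := (hPB (hcP j)).1
        rwa [mem_ball] at this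
      · rw [mem_powSet_iff]
        intro j
        rw [proj_glue]
        exact (hPB (hcP j)).2
    have hQsep : ∀ x ∈ Q, ∀ y ∈ Q, x ≠ y → 2 * 1 ≤ dist x y := by
      intro x hx y hy hxy
      obtain ⟨c, hc, rfl⟩ := Finset.mem_image.mp hx
      obtain ⟨c', hc', rfl⟩ := Finset.mem_image.mp hy
      have hcc : c ≠ c' := fun h => hxy (by rw [h])
      obtain ⟨j, hj⟩ := Function.ne_iff.mp hcc
      have h2 : 2 * 1 ≤ dist (c j) (c' j) :=
        hPsep (c j) (Fintype.mem_piFinset.mp hc j) (c' j) (Fintype.mem_piFinset.mp hc' j) hj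
      calc (2:ℝ) * 1 ≤ dist (c j) (c' j) := h2
        _ = dist (proj j (glue c)) (proj j (glue c')) := by rw [proj_glue, proj_glue]
        _ ≤ dist (glue c) (glue c') := dist_proj_le _ _ _
    have := separated_card_le
      (isBounded_coverable (isBounded_ball.subset inter_subset_left) one_pos) hQsub hQsep
    rwa [hQcard] at this

lemma coverNum_empty {α : Type*} [PseudoMetricSpace α] (δ : ℝ) :
    coverNum δ (∅ : Set α) = 0 := by
  have h : (∅ : Set α) ⊆ ⋃ p ∈ (∅ : Finset α), ball p δ := by simp
  exact Nat.le_zero.mp (by simpa using coverNum_le_of_cover h)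

lemma log_nat_le_of_le {a : ℕ} {b : ℝ} (hb : 1 ≤ b) (h : (a:ℝ) ≤ b) :
    Real.log a ≤ Real.log b := by
  rcases Nat.eq_zero_or_pos a with rfl | ha
  · simpa using Real.log_nonneg hb
  · exact Real.log_le_log (by exact_mod_cast ha) h

section analysis
variable {ι : Type*} [Fintype ι]

/-- Shorthand for the function whose limsup is `dimCM`. -/
noncomputable def dimF (Z : Set (EuclideanSpace ℝ ι)) (r : ℝ) : ℝ :=
  Real.log (coverNum 1 (ball (0 : EuclideanSpace ℝ ι) r ∩ Z) : ℝ) / Real.log r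

lemma dimCM_eq_limsup_dimF (Z : Set (EuclideanSpace ℝ ι)) :
    dimCM Z = limsup (dimF Z) atTop := rfl

lemma dimF_nonneg (Z : Set (EuclideanSpace ℝ ι)) :
    ∀ᶠ r : ℝ in atTop, 0 ≤ dimF Z r := by
  filter_upwards [eventually_gt_atTop 1] with r hr
  exact div_nonneg (Real.log_natCast_nonneg _) (Real.log_pos hr).le

lemma dimF_le (Z : Set (EuclideanSpace ℝ ι)) :
    ∀ᶠ r : ℝ in atTop, dimF Z r ≤ 2 * (Fintype.card ι : ℝ) := by
  set d := Fintype.card ι with hd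
  filter_upwards [eventually_ge_atTop (max 2 (2*(d:ℝ)+5))] with r hr
  have hr2 : (2:ℝ) ≤ r := le_trans (le_max_left _ _) hr
  have hrd : 2*(d:ℝ)+5 ≤ r := le_trans (le_max_right _ _) hr
  have hlogr : 0 < Real.log r := Real.log_pos (by linarith)
  have h1 : (coverNum 1 (ball (0 : EuclideanSpace ℝ ι) r ∩ Z) : ℝ) ≤ ((2*(d:ℝ)+5) * r)^d := by
    have hmono : coverNum 1 (ball (0 : EuclideanSpace ℝ ι) r ∩ Z) ≤
        coverNum 1 (ball (0 : EuclideanSpace ℝ ι) r) :=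
      coverNum_mono (isBounded_coverable isBounded_ball one_pos) inter_subset_left
    calc (coverNum 1 (ball (0 : EuclideanSpace ℝ ι) r ∩ Z) : ℝ) ≤
          (coverNum 1 (ball (0 : EuclideanSpace ℝ ι) r) : ℝ) := by exact_mod_cast hmono
      _ ≤ ((2*(d:ℝ)+5) * r)^d := grid_cover (by linarith)
  have hbase : (1:ℝ) ≤ (2*(d:ℝ)+5) * r := by nlinarith [Nat.cast_nonneg (α := ℝ) d]
  have h2 : Real.log (coverNum 1 (ball (0 : EuclideanSpace ℝ ι) r ∩ Z) : ℝ) ≤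
      (d:ℝ) * (Real.log (2*(d:ℝ)+5) + Real.log r) := by
    calc Real.log (coverNum 1 (ball (0 : EuclideanSpace ℝ ι) r ∩ Z) : ℝ) ≤
          Real.log (((2*(d:ℝ)+5) * r)^d) := log_nat_le_of_le (one_le_pow₀ hbase) h1
      _ = (d:ℝ) * (Real.log (2*(d:ℝ)+5) + Real.log r) := by
          rw [Real.log_pow, Real.log_mul (by linarith) (by linarith)]
  have h3 : Real.log (2*(d:ℝ)+5) ≤ Real.log r := Real.log_le_log (by linarith) hrd
  rw [dimF, div_le_iff₀ hlogr]
  nlinarith [Nat.cast_nonneg (α := ℝ) d]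

lemma dimF_isBounded (Z : Set (EuclideanSpace ℝ ι)) :
    IsBoundedUnder (· ≤ ·) atTop (dimF Z) :=
  ⟨2 * (Fintype.card ι : ℝ), eventually_map.mpr (dimF_le Z)⟩

lemma dimF_isBounded_ge (Z : Set (EuclideanSpace ℝ ι)) :
    IsBoundedUnder (· ≥ ·) atTop (dimF Z) :=
  ⟨0, eventually_map.mpr (dimF_nonneg Z)⟩

lemma dimF_isCobounded (Z : Set (EuclideanSpace ℝ ι)) :
    IsCoboundedUnder (· ≤ ·) atTop (dimF Z) :=
  (dimF_isBounded_ge Z).isCoboundedUnder_le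

lemma eventually_one_le_coverNum {Z : Set (EuclideanSpace ℝ ι)} (hZ : Z.Nonempty) :
    ∀ᶠ r : ℝ in atTop, 1 ≤ coverNum 1 (ball (0 : EuclideanSpace ℝ ι) r ∩ Z) := by
  obtain ⟨x₀, hx₀⟩ := hZ
  filter_upwards [eventually_gt_atTop ‖x₀‖] with r hr
  apply one_le_coverNum (isBounded_coverable (isBounded_ball.subset inter_subset_left) one_pos)
  exact ⟨x₀, by rw [mem_ball, dist_zero_right]; exact hr, hx₀⟩

lemma dimCM_nonneg_of_nonempty {Z : Set (EuclideanSpace ℝ ι)} : (0:ℝ) ≤ dimCM Z := by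
  rw [dimCM_eq_limsup_dimF]
  exact le_limsup_of_frequently_le ((dimF_nonneg Z).frequently) (dimF_isBounded Z)

end analysis

lemma dimCM_empty_set {ι : Type*} [Fintype ι] : dimCM (∅ : Set (EuclideanSpace ℝ ι)) = 0 := by
  rw [dimCM_eq_limsup_dimF]
  have h : dimF (∅ : Set (EuclideanSpace ℝ ι)) = fun _ => (0:ℝ) := by
    funext r
    rw [dimF, inter_empty, coverNum_empty]
    simp
  rw [h, limsup_const]

set_option maxHeartbeats 2000000 in
theorem stmt7 (n : ℕ) (X : Set (EuclideanSpace ℝ (Fin n))) (k : ℕ) :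
    dimCM (powSet X k) = (k : ℝ) * dimCM X := by
  rcases Nat.eq_zero_or_pos k with rfl | hk
  · -- k = 0 : the power space is a single point
    simp only [Nat.cast_zero, zero_mul]
    rw [dimCM_eq_limsup_dimF]
    have h : dimF (powSet X 0) = fun _ => (0:ℝ) := by
      funext r
      have hle : coverNum 1 (ball (0 : EuclideanSpace ℝ (Fin 0 × Fin n)) r ∩ powSet X 0) ≤ 1 := by
        have hcov : ball (0 : EuclideanSpace ℝ (Fin 0 × Fin n)) r ∩ powSet X 0 ⊆
            ⋃ p ∈ ({0} : Finset (EuclideanSpace ℝ (Fin 0 × Fin n))), ball p 1 := by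
          intro z _
          simp only [Finset.mem_singleton, mem_iUnion, exists_prop]
          refine ⟨0, rfl, ?_⟩
          rw [mem_ball, EuclideanSpace.dist_eq]
          have : ∑ i : Fin 0 × Fin n, dist (z i) ((0 : EuclideanSpace ℝ (Fin 0 × Fin n)) i) ^ 2
              = 0 := by
            apply Finset.sum_eq_zero
            intro i _
            exact absurd i.1.2 (by omega)
          rw [this]
          simp
        simpa using coverNum_le_of_cover hcov
      interval_cases h : coverNum 1 (ball (0 : EuclideanSpace ℝ (Fin 0 × Fin n)) r ∩ powSet X 0) <;>
        simp [dimF, h]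
    rw [h, limsup_const]
  rcases X.eq_empty_or_nonempty with rfl | hXne
  · -- X = ∅
    have hpow : powSet (∅ : Set (EuclideanSpace ℝ (Fin n))) k = ∅ := by
      rw [eq_empty_iff_forall_notMem]
      intro z hz
      exact hz ⟨0, hk⟩
    rw [hpow, dimCM_empty_set, dimCM_empty_set, mul_zero]
  -- main case
  obtain ⟨x₀, hx₀⟩ := hXne
  have hXne : X.Nonempty := ⟨x₀, hx₀⟩
  have hkR : (1:ℝ) ≤ (k:ℝ) := by exact_mod_cast hk
  have hsqk : (1:ℝ) ≤ Real.sqrt k := by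
    rw [show (1:ℝ) = Real.sqrt 1 by simp]
    exact Real.sqrt_le_sqrt hkR
  have hsqk0 : (0:ℝ) < Real.sqrt k := by linarith
  set N : ℝ → ℕ := fun r => coverNum 1 (ball (0 : EuclideanSpace ℝ (Fin n)) r ∩ X) with hN
  set Mk : ℝ → ℕ := fun r =>
    coverNum 1 (ball (0 : EuclideanSpace ℝ (Fin k × Fin n)) r ∩ powSet X k) with hMk
  set C₀ : ℕ := coverNum 1 (ball (0 : EuclideanSpace ℝ (Fin k × Fin n)) (Real.sqrt k)) with hC₀
  set C₂ : ℕ := coverNum 1 (ball (0 : EuclideanSpace ℝ (Fin n)) 2) with hC₂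
  have hC₀1 : 1 ≤ C₀ :=
    one_le_coverNum (isBounded_coverable isBounded_ball one_pos)
      ⟨0, by rw [mem_ball, dist_self]; linarith⟩
  have hC₂1 : 1 ≤ C₂ :=
    one_le_coverNum (isBounded_coverable isBounded_ball one_pos)
      ⟨0, by rw [mem_ball, dist_self]; norm_num⟩
  have hC₀R : (1:ℝ) ≤ (C₀:ℝ) := by exact_mod_cast hC₀1
  have hC₂R : (1:ℝ) ≤ (C₂:ℝ) := by exact_mod_cast hC₂1
  set L : ℝ := dimCM X with hL
  set G : ℝ := dimCM (powSet X k) with hG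
  have hGlim : G = limsup (dimF (powSet X k)) atTop := rfl
  have hLlim : L = limsup (dimF X) atTop := rfl
  have hG0 : 0 ≤ G := dimCM_nonneg_of_nonempty
  have hL0 : 0 ≤ L := dimCM_nonneg_of_nonempty
  apply le_antisymm
  · -- G ≤ k * L
    apply le_of_forall_pos_le_add
    intro ε hε
    set δ : ℝ := ε / (k+1) with hδdef
    have hδ : 0 < δ := by positivity
    have hfL : ∀ᶠ r in atTop, dimF X r < L + δ := by
      apply eventually_lt_of_limsup_lt _ (dimF_isBounded X)
      rw [← hLlim]; linarith
    have hev2 : ∀ᶠ r in atTop, 1 ≤ N r := eventually_one_le_coverNum hXne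
    have hev3 : ∀ᶠ r in atTop, Real.log (C₀:ℝ) ≤ δ * Real.log r := by
      filter_upwards [Real.tendsto_log_atTop.eventually_ge_atTop (Real.log C₀ / δ)] with r hr
      rw [div_le_iff₀ hδ] at hr
      linarith [hr]
    have hkey : ∀ᶠ r in atTop, dimF (powSet X k) r ≤ (k:ℝ) * (L + δ) + δ := by
      filter_upwards [hfL, hev2, hev3, eventually_gt_atTop 1] with r h1 h2 h3 h4
      have hlogr : 0 < Real.log r := Real.log_pos h4
      have hNR : (1:ℝ) ≤ (N r : ℝ) := by exact_mod_cast h2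
      have hA := lemA hk X r
      have hAc : (Mk r : ℝ) ≤ (N r : ℝ)^k * (C₀ : ℝ) := by exact_mod_cast hA
      have hrhs1 : (1:ℝ) ≤ (N r : ℝ)^k * (C₀ : ℝ) := by
        have := one_le_pow₀ hNR (n := k)
        nlinarith
      have hlog1 : Real.log (Mk r : ℝ) ≤ (k:ℝ) * Real.log (N r : ℝ) + Real.log (C₀:ℝ) := by
        calc Real.log (Mk r : ℝ) ≤ Real.log ((N r : ℝ)^k * (C₀ : ℝ)) :=
              log_nat_le_of_le hrhs1 hAc
          _ = (k:ℝ) * Real.log (N r : ℝ) + Real.log (C₀:ℝ) := by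
              rw [Real.log_mul (by positivity) (by positivity), Real.log_pow]
      have hdimF : dimF (powSet X k) r ≤ (k:ℝ) * dimF X r + δ := by
        rw [dimF, div_le_iff₀ hlogr]
        have he : ((k:ℝ) * (Real.log (N r : ℝ) / Real.log r) + δ) * Real.log r
            = (k:ℝ) * Real.log (N r : ℝ) + δ * Real.log r := by
          field_simp
        rw [show dimF X r = Real.log (N r : ℝ) / Real.log r from rfl, he]
        linarith
      have hkf : (k:ℝ) * dimF X r ≤ (k:ℝ) * (L + δ) :=
        mul_le_mul_of_nonneg_left h1.le (by positivity)
      linarith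
    have := limsup_le_of_le (dimF_isCobounded (powSet X k)) hkey
    rw [← hGlim] at this
    have hδε : ((k:ℝ)+1) * δ = ε := by
      rw [hδdef]
      field_simp
    nlinarith
  · -- k * L ≤ G
    have key : ∀ c : ℝ, 0 < c → c < L → ∀ ε' : ℝ, 0 < ε' → (k:ℝ) * c - ε' ≤ G := by
      intro c hc hcL ε' hε'
      have hfreq : ∃ᶠ r in atTop, c < dimF X r := by
        apply frequently_lt_of_lt_limsup (dimF_isCobounded X)
        rw [← hLlim]; exact hcL
      have hev : ∀ᶠ r in atTop, 1 < r ∧ 1 ≤ N r ∧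
          (k:ℝ)*Real.log (C₂:ℝ) + ((k:ℝ)*c - ε') * Real.log (Real.sqrt k) ≤ ε' * Real.log r := by
        have h3 : ∀ᶠ r in atTop,
            (k:ℝ)*Real.log (C₂:ℝ) + ((k:ℝ)*c - ε') * Real.log (Real.sqrt k) ≤ ε' * Real.log r := by
          filter_upwards [Real.tendsto_log_atTop.eventually_ge_atTop
            (((k:ℝ)*Real.log (C₂:ℝ) + ((k:ℝ)*c - ε') * Real.log (Real.sqrt k)) / ε')] with r hr
          rw [div_le_iff₀ hε'] at hr
          linarith
        filter_upwards [eventually_gt_atTop 1, eventually_one_le_coverNum hXne, h3] with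
          r h1 h2 h3
        exact ⟨h1, h2, h3⟩
      have hfreq2 : ∃ᶠ r in atTop, (k:ℝ)*c - ε' ≤ dimF (powSet X k) (Real.sqrt k * r) := by
        apply (hfreq.and_eventually hev).mono
        rintro r ⟨hcf, h1, h2, h3⟩
        have hlogr : 0 < Real.log r := Real.log_pos h1
        obtain ⟨m, hm1, hm2⟩ := lemB hk X r
        have hm0 : 1 ≤ m := by
          by_contra hm
          push_neg at hm
          have hm0' : m = 0 := by omega
          rw [hm0', zero_mul] at hm1
          have hN0 : N r = 0 := Nat.le_zero.mp hm1
          omega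
        have hmR : (1:ℝ) ≤ (m:ℝ) := by exact_mod_cast hm0
        have hNR : (1:ℝ) ≤ (N r : ℝ) := by exact_mod_cast h2
        have hlogN : c * Real.log r < Real.log (N r : ℝ) := by
          have h := hcf
          rw [dimF, lt_div_iff₀ hlogr] at h
          exact h
        have hlog2 : Real.log (N r : ℝ) ≤ Real.log (m:ℝ) + Real.log (C₂:ℝ) := by
          calc Real.log (N r : ℝ) ≤ Real.log ((m:ℝ) * (C₂:ℝ)) := by
                apply Real.log_le_log (by linarith)
                exact_mod_cast hm1
            _ = Real.log (m:ℝ) + Real.log (C₂:ℝ) := by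
                rw [Real.log_mul (by linarith) (by linarith)]
        have hlog3 : (k:ℝ) * Real.log (m:ℝ) ≤ Real.log (Mk (Real.sqrt k * r) : ℝ) := by
          have h := hm2
          have : ((m:ℝ))^k ≤ (Mk (Real.sqrt k * r) : ℝ) := by exact_mod_cast h
          calc (k:ℝ) * Real.log (m:ℝ) = Real.log ((m:ℝ)^k) := (Real.log_pow (m:ℝ) k).symm
            _ ≤ Real.log (Mk (Real.sqrt k * r) : ℝ) :=
                Real.log_le_log (by positivity) this
        have hsr1 : (1:ℝ) < Real.sqrt k * r := by nlinarith
        have hlogs : 0 < Real.log (Real.sqrt k * r) := Real.log_pos hsr1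
        have hlogmul : Real.log (Real.sqrt k * r) = Real.log (Real.sqrt k) + Real.log r :=
          Real.log_mul (by linarith) (by linarith)
        rw [dimF, le_div_iff₀ hlogs, hlogmul]
        nlinarith [hlogN, hlog2, hlog3, h3]
      have htend : Tendsto (fun r : ℝ => Real.sqrt k * r) atTop atTop :=
        Tendsto.const_mul_atTop hsqk0 tendsto_id
      have hfreq3 : ∃ᶠ s in atTop, (k:ℝ)*c - ε' ≤ dimF (powSet X k) s :=
        htend.frequently hfreq2
      have := le_limsup_of_frequently_le hfreq3 (dimF_isBounded (powSet X k))
      rw [← hGlim] at this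
      exact this
    apply le_of_forall_pos_le_add
    intro ε hε
    set η : ℝ := ε / (2*(k+1)) with hη
    have hη0 : 0 < η := by positivity
    rcases le_or_gt L η with hLe | hLg
    · have h1 : (k:ℝ) * L ≤ (k:ℝ) * η := mul_le_mul_of_nonneg_left hLe (by positivity)
      have h2 : (k:ℝ) * η ≤ ε / 2 := by
        rw [hη, mul_div_assoc', div_le_div_iff₀ (by positivity) (by norm_num)]
        nlinarith
      linarith
    · have hc : 0 < L - η := by linarith
      have hcL : L - η < L := by linarith
      have := key (L - η) hc hcL (ε/2) (by positivity)
      have hkη : (k:ℝ) * η ≤ ε / 2 := by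
        rw [hη, mul_div_assoc', div_le_div_iff₀ (by positivity) (by norm_num)]
        nlinarith
      nlinarith
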